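/- Let p be a positive integer, and let A, b₁, μ, ν be real numbers with μ ≠ 0. Set a₂ = −ν/μ³ and a_{p+2} = −2·A·b₁^p / (μ²·(p+1)·(p+2)). Let g : ℝ → ℝ be three times differentiable and satisfy g″(ξ) = a₂·g(ξ) + ((p+2)/2)·a_{p+2}·g(ξ)^{p+1} for all ξ ∈ ℝ. Then u(x, t) = b₁·g(μx + νt) satisfies the generalized Korteweg–de Vries equation u_t + A·u^p·u_x + u_{xxx} = 0 for all (x, t) ∈ ℝ². -/
import Mathlib

private lemma aff_deriv (f : ℝ → ℝ) (hf : Differentiable ℝ f) (b a c x : ℝ) :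
    deriv (fun y => b * f (a * y + c)) x = b * a * deriv f (a * x + c) := by
  have h : HasDerivAt (fun y => b * f (a * y + c)) (b * (deriv f (a * x + c) * a)) x := by
    have := (((hf (a * x + c)).hasDerivAt.comp x
      (((hasDerivAt_id x).const_mul a).add_const c))).const_mul b
    simpa [Function.comp] using this
  rw [h.deriv]; ring

private lemma aff_deriv_fun (f : ℝ → ℝ) (hf : Differentiable ℝ f) (b a c : ℝ) :
    (deriv (fun y => b * f (a * y + c))) = fun x => b * a * deriv f (a * x + c) :=
  funext fun x => aff_deriv f hf b a c x

theorem stmt14 (p : ℕ) (hp : 0 < p) (A b₁ μ ν : ℝ) (hμ : μ ≠ 0)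
    (g : ℝ → ℝ)
    (hg1 : Differentiable ℝ g) (hg2 : Differentiable ℝ (deriv g))
    (hg3 : Differentiable ℝ (deriv (deriv g)))
    (hode : ∀ ξ : ℝ, deriv (deriv g) ξ =
      (-ν / μ ^ 3) * g ξ
        + (((p : ℝ) + 2) / 2) * (-2 * A * b₁ ^ p / (μ ^ 2 * ((p : ℝ) + 1) * ((p : ℝ) + 2)))
            * g ξ ^ (p + 1))
    (u : ℝ → ℝ → ℝ) (hu : ∀ x t : ℝ, u x t = b₁ * g (μ * x + ν * t)) :
    ∀ x t : ℝ,
      deriv (fun τ => u x τ) t + A * (u x t) ^ p * deriv (fun y => u y t) x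
        + iteratedDeriv 3 (fun y => u y t) x = 0 := by
  intro x t
  set a₂ : ℝ := -ν / μ ^ 3 with ha₂
  set C : ℝ := (((p : ℝ) + 2) / 2) * (-2 * A * b₁ ^ p / (μ ^ 2 * ((p : ℝ) + 1) * ((p : ℝ) + 2)))
    with hC
  have hode' : deriv (deriv g) = fun ξ => a₂ * g ξ + C * g ξ ^ (p + 1) := funext hode
  -- third derivative of g
  have hg3' : ∀ ξ : ℝ, deriv (deriv (deriv g)) ξ =
      a₂ * deriv g ξ + C * ((↑(p + 1) : ℝ) * g ξ ^ p * deriv g ξ) := by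
    intro ξ
    rw [hode']
    have hgd := (hg1 ξ).hasDerivAt
    have h : HasDerivAt (fun ξ => a₂ * g ξ + C * g ξ ^ (p + 1))
        (a₂ * deriv g ξ + C * ((↑(p + 1) : ℝ) * g ξ ^ (p + 1 - 1) * deriv g ξ)) ξ :=
      (hgd.const_mul a₂).add ((hgd.pow (p + 1)).const_mul C)
    simpa using h.deriv
  -- t derivative
  have htfun : (fun τ => u x τ) = fun τ => b₁ * g (ν * τ + μ * x) := by
    funext τ; rw [hu]; ring_nf
  have hT : deriv (fun τ => u x τ) t = b₁ * ν * deriv g (μ * x + ν * t) := by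
    rw [htfun, aff_deriv g hg1 b₁ ν (μ * x)]; ring_nf
  -- x derivatives
  have hxfun : (fun y => u y t) = fun y => b₁ * g (μ * y + ν * t) := funext fun y => hu y t
  have hX1 : deriv (fun y => u y t) x = b₁ * μ * deriv g (μ * x + ν * t) := by
    rw [hxfun, aff_deriv g hg1 b₁ μ (ν * t)]
  have hX3 : iteratedDeriv 3 (fun y => u y t) x
      = b₁ * μ * μ * μ * deriv (deriv (deriv g)) (μ * x + ν * t) := by
    rw [hxfun]
    have e1 : (deriv (fun y => b₁ * g (μ * y + ν * t)))
        = fun y => b₁ * μ * deriv g (μ * y + ν * t) := aff_deriv_fun g hg1 b₁ μ (ν * t)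
    have e2 : (deriv fun y => b₁ * μ * deriv g (μ * y + ν * t))
        = fun y => b₁ * μ * μ * deriv (deriv g) (μ * y + ν * t) := by
      rw [aff_deriv_fun (deriv g) hg2 (b₁ * μ) μ (ν * t)]
    have e3 : deriv (fun y => b₁ * μ * μ * deriv (deriv g) (μ * y + ν * t)) x
        = b₁ * μ * μ * μ * deriv (deriv (deriv g)) (μ * x + ν * t) := by
      rw [aff_deriv (deriv (deriv g)) hg3 (b₁ * μ * μ) μ (ν * t)]
    simp only [iteratedDeriv_succ, iteratedDeriv_zero]
    rw [e1, e2, e3]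
  rw [hT, hu, hX1, hX3, hg3' (μ * x + ν * t)]
  have hp1 : ((p : ℝ) + 1) ≠ 0 := by positivity
  have hp2 : ((p : ℝ) + 2) ≠ 0 := by positivity
  rw [ha₂, hC]
  push_cast
  field_simp
  ring
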